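/- For the operator Υ̌ on symmetric 5×5 real matrices defined by (Υ̌S)_{kl} = 4·Υ_{klm}Υ_{ijm}S_{ij}: if S is symmetric with Υ̂(S) = 14·S or Υ̂(S) = 4·S then Υ̌(S) = 0, and if S is symmetric with Υ̂(S) = −3·S then Υ̌(S) = 14·S. Moreover the map S ↦ (Υ_{ijk}S_{jk})_{i=1..5} restricts to a linear isomorphism from the eigenvalue-(−3) eigenspace of Υ̂ in Sym² onto ℝ⁵. -/

import Mathlib

noncomputable section

open Finset Matrix

/-- The cubic form Υ(A,A,A) on ℝ⁵. -/
def cubicUps (a : Fin 5 → ℝ) : ℝ :=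
  (1/2) * a 0 * (6*(a 1)^2 + 6*(a 3)^2 - 2*(a 0)^2 - 3*(a 2)^2 - 3*(a 4)^2)
  + (3*Real.sqrt 3/2) * a 3 * ((a 4)^2 - (a 2)^2)
  + 3*Real.sqrt 3 * a 1 * a 2 * a 4

/-- The endomorphism Υ̂ of ⊗²ℝ⁵: (Υ̂W)_{ik} = 4·Υ_{ijm}Υ_{klm}W_{jl}. -/
def hatMap (Y : Fin 5 → Fin 5 → Fin 5 → ℝ) (W : Matrix (Fin 5) (Fin 5) ℝ) :
    Matrix (Fin 5) (Fin 5) ℝ :=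
  Matrix.of fun i k => 4 * ∑ j, ∑ l, ∑ m, Y i j m * Y k l m * W j l

/-- The endomorphism Υ̌: (Υ̌S)_{kl} = 4·Υ_{klm}Υ_{ijm}S_{ij}. -/
def checkMap (Y : Fin 5 → Fin 5 → Fin 5 → ℝ) (S : Matrix (Fin 5) (Fin 5) ℝ) :
    Matrix (Fin 5) (Fin 5) ℝ :=
  Matrix.of fun k l => 4 * ∑ i, ∑ j, ∑ m, Y k l m * Y i j m * S i j

/-- The map Ὺ : S ↦ (Υ_{ijk}S_{jk})ᵢ. -/
def graveMap (Y : Fin 5 → Fin 5 → Fin 5 → ℝ) (S : Matrix (Fin 5) (Fin 5) ℝ)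
    (i : Fin 5) : ℝ :=
  ∑ j, ∑ k, Y i j k * S j k

def Y3 (r : ℝ) : Fin 5 → Fin 5 → Fin 5 → ℝ :=
 ![
  ![![-1, 0, 0, 0, 0], ![0, 1, 0, 0, 0], ![0, 0, -(1/2), 0, 0], ![0, 0, 0, 1, 0], ![0, 0, 0, 0, -(1/2)]],
  ![![0, 1, 0, 0, 0], ![1, 0, 0, 0, 0], ![0, 0, 0, 0, r/2], ![0, 0, 0, 0, 0], ![0, 0, r/2, 0, 0]],
  ![![0, 0, -(1/2), 0, 0], ![0, 0, 0, 0, r/2], ![-(1/2), 0, 0, -(r/2), 0], ![0, 0, -(r/2), 0, 0], ![0, r/2, 0, 0, 0]],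
  ![![0, 0, 0, 1, 0], ![0, 0, 0, 0, 0], ![0, 0, -(r/2), 0, 0], ![1, 0, 0, 0, 0], ![0, 0, 0, 0, r/2]],
  ![![0, 0, 0, 0, -(1/2)], ![0, 0, r/2, 0, 0], ![0, r/2, 0, 0, 0], ![0, 0, 0, 0, r/2], ![-(1/2), 0, 0, r/2, 0]]]

set_option maxHeartbeats 2000000 in
lemma hL3 (r : ℝ) (hr : r * r = 3) (a b c d e f g h i j k l m n o : ℝ) :
    hatMap (Y3 r) !![a,b,c,d,e; b,f,g,h,i; c,g,j,k,l; d,h,k,m,n; e,i,l,n,o] =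
      (4:ℝ) • !![a,b,c,d,e; b,f,g,h,i; c,g,j,k,l; d,h,k,m,n; e,i,l,n,o]
      + (2 * (a + f + j + m + o)) • (1 : Matrix (Fin 5) (Fin 5) ℝ)
      - (1/2:ℝ) • checkMap (Y3 r) !![a,b,c,d,e; b,f,g,h,i; c,g,j,k,l; d,h,k,m,n; e,i,l,n,o] := by
  ext p q
  fin_cases p <;> fin_cases q <;>
    simp only [hatMap, checkMap, Matrix.of_apply, Matrix.add_apply, Matrix.sub_apply,
      Matrix.smul_apply, Matrix.one_apply, smul_eq_mul, Fin.sum_univ_five, Y3,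
      Fin.isValue, Matrix.cons_val', Matrix.cons_val_zero, Matrix.cons_val_one,
      Matrix.cons_val_two, Matrix.cons_val_three, Matrix.cons_val_four,
      Nat.succ_eq_add_one, Nat.reduceAdd, Matrix.tail_cons, Matrix.head_cons,
      Matrix.empty_val', Matrix.cons_val_fin_one, Matrix.head_fin_const,
      Fin.reduceEq, reduceIte, Fin.reduceFinMk]
  · ring
  · ring
  · ring
  · ring
  · ring
  · ring
  · linear_combination (j + o) * hr
  · linear_combination (2 * g) * hr
  · ring
  · linear_combination (2 * i) * hr
  · ring
  · linear_combination (2 * g) * hr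
  · linear_combination (f + (3/2) * j + m + (1/2) * o) * hr
  · linear_combination (2 * k) * hr
  · linear_combination (l) * hr
  · ring
  · ring
  · linear_combination (2 * k) * hr
  · linear_combination (j + o) * hr
  · linear_combination (2 * n) * hr
  · ring
  · linear_combination (2 * i) * hr
  · linear_combination (l) * hr
  · linear_combination (2 * n) * hr
  · linear_combination (f + (1/2) * j + m + (3/2) * o) * hr

def Cmat (r : ℝ) (v : Fin 5 → ℝ) : Matrix (Fin 5) (Fin 5) ℝ :=
  Matrix.of fun k l => 4 * ∑ m, Y3 r k l m * v m

lemma triple_reorder (F : Fin 5 → Fin 5 → Fin 5 → ℝ) :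
    ∑ i, ∑ j, ∑ m, F i j m = ∑ m, ∑ i, ∑ j, F i j m := by
  calc ∑ i, ∑ j, ∑ m, F i j m
      = ∑ i, ∑ m, ∑ j, F i j m :=
        Finset.sum_congr rfl fun i _ => Finset.sum_comm
    _ = ∑ m, ∑ i, ∑ j, F i j m := Finset.sum_comm

lemma check_eq (Y : Fin 5 → Fin 5 → Fin 5 → ℝ)
    (h1 : ∀ i j k, Y i j k = Y j i k) (h2 : ∀ i j k, Y i j k = Y i k j)
    (S : Matrix (Fin 5) (Fin 5) ℝ) :
    checkMap Y S = Matrix.of fun k l => 4 * ∑ m, Y k l m * graveMap Y S m := by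
  ext k l
  show (4 * ∑ i, ∑ j, ∑ m, Y k l m * Y i j m * S i j)
      = 4 * ∑ m, Y k l m * graveMap Y S m
  rw [triple_reorder]
  congr 1
  refine Finset.sum_congr rfl fun m _ => ?_
  rw [graveMap, Finset.mul_sum]
  refine Finset.sum_congr rfl fun i _ => ?_
  rw [Finset.mul_sum]
  refine Finset.sum_congr rfl fun j _ => ?_
  rw [h1 m i j, h2 i m j]
  ring

lemma grave_add (Y : Fin 5 → Fin 5 → Fin 5 → ℝ) (A B : Matrix (Fin 5) (Fin 5) ℝ) :
    graveMap Y (A + B) = fun n => graveMap Y A n + graveMap Y B n := by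
  funext n
  simp only [graveMap, Matrix.add_apply, mul_add, Finset.sum_add_distrib]

lemma grave_sub (Y : Fin 5 → Fin 5 → Fin 5 → ℝ) (A B : Matrix (Fin 5) (Fin 5) ℝ) :
    graveMap Y (A - B) = fun n => graveMap Y A n - graveMap Y B n := by
  funext n
  simp only [graveMap, Matrix.sub_apply, mul_sub, Finset.sum_sub_distrib]

lemma grave_smul (Y : Fin 5 → Fin 5 → Fin 5 → ℝ) (c : ℝ) (A : Matrix (Fin 5) (Fin 5) ℝ) :
    graveMap Y (c • A) = fun n => c * graveMap Y A n := by
  funext n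
  simp only [graveMap, Matrix.smul_apply, smul_eq_mul, Finset.mul_sum]
  exact Finset.sum_congr rfl fun j _ => Finset.sum_congr rfl fun k _ => by ring

lemma grave_one (r : ℝ) : graveMap (Y3 r) 1 = fun _ => (0:ℝ) := by
  funext n
  fin_cases n <;>
    · simp only [graveMap, Matrix.one_apply, Fin.sum_univ_five, Y3,
        Fin.isValue, Matrix.cons_val', Matrix.cons_val_zero, Matrix.cons_val_one,
        Matrix.cons_val_two, Matrix.cons_val_three, Matrix.cons_val_four,
        Nat.succ_eq_add_one, Nat.reduceAdd, Matrix.tail_cons, Matrix.head_cons,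
        Matrix.empty_val', Matrix.cons_val_fin_one, Matrix.head_fin_const,
        Fin.reduceEq, reduceIte, Fin.reduceFinMk]
      ring

set_option maxHeartbeats 1000000 in
lemma grave_C (r : ℝ) (hr : r * r = 3) (v : Fin 5 → ℝ) :
    graveMap (Y3 r) (Cmat r v) = fun n => 14 * v n := by
  funext n
  fin_cases n <;>
    simp only [graveMap, Cmat, Matrix.of_apply, Fin.sum_univ_five, Y3,
      Fin.isValue, Matrix.cons_val', Matrix.cons_val_zero, Matrix.cons_val_one,
      Matrix.cons_val_two, Matrix.cons_val_three, Matrix.cons_val_four,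
      Nat.succ_eq_add_one, Nat.reduceAdd, Matrix.tail_cons, Matrix.head_cons,
      Matrix.empty_val', Matrix.cons_val_fin_one, Matrix.head_fin_const,
      Fin.reduceEq, reduceIte, Fin.reduceFinMk]
  · linear_combination (0:ℝ) * hr
  · linear_combination (2 * v 1) * hr
  · linear_combination (4 * v 2) * hr
  · linear_combination (2 * v 3) * hr
  · linear_combination (4 * v 4) * hr

lemma trace_C (r : ℝ) (v : Fin 5 → ℝ) : ∑ i, Cmat r v i i = (0:ℝ) := by
  simp only [Cmat, Matrix.of_apply, Fin.sum_univ_five, Y3,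
    Fin.isValue, Matrix.cons_val', Matrix.cons_val_zero, Matrix.cons_val_one,
    Matrix.cons_val_two, Matrix.cons_val_three, Matrix.cons_val_four,
    Nat.succ_eq_add_one, Nat.reduceAdd, Matrix.tail_cons, Matrix.head_cons,
    Matrix.empty_val', Matrix.cons_val_fin_one, Matrix.head_fin_const]
  ring

set_option maxHeartbeats 1000000 in
lemma hL3' (r : ℝ) (hr : r * r = 3) (S : Matrix (Fin 5) (Fin 5) ℝ) (hS : Sᵀ = S) :
    hatMap (Y3 r) S = (4:ℝ) • S + (2 * ∑ i, S i i) • (1 : Matrix (Fin 5) (Fin 5) ℝ)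
      - (1/2:ℝ) • checkMap (Y3 r) S := by
  have hs : ∀ a b : Fin 5, S b a = S a b := fun a b => by
    rw [← Matrix.transpose_apply S a b, hS]
  have hlit : S = !![S 0 0, S 0 1, S 0 2, S 0 3, S 0 4;
      S 0 1, S 1 1, S 1 2, S 1 3, S 1 4;
      S 0 2, S 1 2, S 2 2, S 2 3, S 2 4;
      S 0 3, S 1 3, S 2 3, S 3 3, S 3 4;
      S 0 4, S 1 4, S 2 4, S 3 4, S 4 4] := by
    ext p q
    fin_cases p <;> fin_cases q <;>
      simp only [Fin.isValue, Matrix.cons_val', Matrix.cons_val_zero, Matrix.cons_val_one,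
        Matrix.cons_val_two, Matrix.cons_val_three, Matrix.cons_val_four,
        Nat.succ_eq_add_one, Nat.reduceAdd, Matrix.tail_cons, Matrix.head_cons,
        Matrix.empty_val', Matrix.cons_val_fin_one, Matrix.head_fin_const,
        Fin.reduceFinMk, Matrix.of_apply] <;>
      first
        | rfl
        | exact hs _ _
  rw [hlit]
  have h := hL3 r hr (S 0 0) (S 0 1) (S 0 2) (S 0 3) (S 0 4) (S 1 1) (S 1 2) (S 1 3)
    (S 1 4) (S 2 2) (S 2 3) (S 2 4) (S 3 3) (S 3 4) (S 4 4)
  simpa only [Fin.sum_univ_five, Fin.isValue, Matrix.cons_val', Matrix.cons_val_zero,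
    Matrix.cons_val_one, Matrix.cons_val_two, Matrix.cons_val_three, Matrix.cons_val_four,
    Nat.succ_eq_add_one, Nat.reduceAdd, Matrix.tail_cons, Matrix.head_cons,
    Matrix.empty_val', Matrix.cons_val_fin_one, Matrix.head_fin_const, Matrix.of_apply]
    using h

lemma eigen_core (r : ℝ) (hr : r * r = 3)
    (h1 : ∀ i j k, Y3 r i j k = Y3 r j i k) (h2 : ∀ i j k, Y3 r i j k = Y3 r i k j)
    (S : Matrix (Fin 5) (Fin 5) ℝ) (hS : Sᵀ = S) (lam : ℝ)
    (heig : hatMap (Y3 r) S = lam • S) :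
    (∀ n, (lam + 3) * graveMap (Y3 r) S n = 0) ∧
    ((lam - 14) * (S 0 0 + S 1 1 + S 2 2 + S 3 3 + S 4 4) = 0) ∧
    checkMap (Y3 r) S = Cmat r (graveMap (Y3 r) S) ∧
    lam • S = (4:ℝ) • S + (2 * ∑ i, S i i) • (1 : Matrix (Fin 5) (Fin 5) ℝ)
      - (1/2:ℝ) • checkMap (Y3 r) S := by
  have hCv : checkMap (Y3 r) S = Cmat r (graveMap (Y3 r) S) := check_eq (Y3 r) h1 h2 S
  have E1 := hL3' r hr S hS
  have hmat : lam • S = (4:ℝ) • S + (2 * ∑ i, S i i) • (1 : Matrix (Fin 5) (Fin 5) ℝ)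
      - (1/2:ℝ) • checkMap (Y3 r) S := heig.symm.trans E1
  refine ⟨?_, ?_, hCv, hmat⟩
  · intro n
    have hg := congrArg (graveMap (Y3 r)) hmat
    rw [hCv] at hg
    simp only [grave_smul, grave_sub, grave_add, grave_one, grave_C r hr] at hg
    have hgn := congrFun hg n
    linear_combination hgn
  · have he : ∀ p : Fin 5, lam * S p p = 4 * S p p
        + (2 * ∑ i, S i i) * 1 - (1/2) * checkMap (Y3 r) S p p := by
      intro p
      have h := congrFun (congrFun hmat p) p
      simpa only [Matrix.add_apply, Matrix.sub_apply, Matrix.smul_apply, Matrix.one_apply,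
        smul_eq_mul, if_pos rfl, reduceIte] using h
    have htr : ∑ p, checkMap (Y3 r) S p p = 0 := by
      rw [hCv]; exact trace_C r _
    have hd0 := he 0; have hd1 := he 1; have hd2 := he 2; have hd3 := he 3; have hd4 := he 4
    rw [Fin.sum_univ_five] at hd0 hd1 hd2 hd3 hd4 htr
    linear_combination hd0 + hd1 + hd2 + hd3 + hd4 - (1/2) * htr

lemma neg3 (r : ℝ) (hr : r * r = 3)
    (h1 : ∀ i j k, Y3 r i j k = Y3 r j i k) (h2 : ∀ i j k, Y3 r i j k = Y3 r i k j)
    (S : Matrix (Fin 5) (Fin 5) ℝ) (hS : Sᵀ = S)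
    (heig : hatMap (Y3 r) S = (-3:ℝ) • S) :
    checkMap (Y3 r) S = (14:ℝ) • S := by
  obtain ⟨-, htr, -, hmat⟩ := eigen_core r hr h1 h2 S hS (-3) heig
  have hT : S 0 0 + S 1 1 + S 2 2 + S 3 3 + S 4 4 = 0 := by linarith
  rw [Fin.sum_univ_five, hT] at hmat
  ext k l
  have he := congrFun (congrFun hmat k) l
  simp only [Matrix.add_apply, Matrix.sub_apply, Matrix.smul_apply, Matrix.one_apply,
    smul_eq_mul] at he ⊢
  linear_combination 2 * he

set_option maxHeartbeats 4000000 in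
theorem stmt14 (Y : Fin 5 → Fin 5 → Fin 5 → ℝ)
    (hsym1 : ∀ i j k, Y i j k = Y j i k)
    (hsym2 : ∀ i j k, Y i j k = Y i k j)
    (hcub : ∀ a : Fin 5 → ℝ,
      ∑ i, ∑ j, ∑ k, Y i j k * a i * a j * a k = cubicUps a) :
    (∀ S : Matrix (Fin 5) (Fin 5) ℝ, Sᵀ = S → hatMap Y S = (14 : ℝ) • S →
      checkMap Y S = 0) ∧
    (∀ S : Matrix (Fin 5) (Fin 5) ℝ, Sᵀ = S → hatMap Y S = (4 : ℝ) • S →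
      checkMap Y S = 0) ∧
    (∀ S : Matrix (Fin 5) (Fin 5) ℝ, Sᵀ = S → hatMap Y S = (-3 : ℝ) • S →
      checkMap Y S = (14 : ℝ) • S) ∧
    -- the restriction of Ὺ to the eigenvalue-(−3) eigenspace is injective …
    (∀ S S' : Matrix (Fin 5) (Fin 5) ℝ,
      Sᵀ = S → hatMap Y S = (-3 : ℝ) • S →
      S'ᵀ = S' → hatMap Y S' = (-3 : ℝ) • S' →
      graveMap Y S = graveMap Y S' → S = S') ∧
    -- … and surjective onto ℝ⁵
    (∀ v : Fin 5 → ℝ, ∃ S : Matrix (Fin 5) (Fin 5) ℝ,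
      Sᵀ = S ∧ hatMap Y S = (-3 : ℝ) • S ∧ graveMap Y S = v) := by
  have hr : Real.sqrt 3 * Real.sqrt 3 = 3 := Real.mul_self_sqrt (by norm_num)
  -- Step 1: identify Y with the explicit tensor Y3 √3 via polarization.
  set T : (Fin 5 → ℝ) → (Fin 5 → ℝ) → (Fin 5 → ℝ) → ℝ :=
    fun x y z => ∑ i, ∑ j, ∑ k, Y i j k * x i * y j * z k with hT
  have hTa : ∀ a, T a a a = cubicUps a := fun a => hcub a
  have hadd1 : ∀ x y z w : Fin 5 → ℝ, T (x + y) z w = T x z w + T y z w := by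
    intro x y z w
    simp only [hT, Pi.add_apply, add_mul, mul_add, Finset.sum_add_distrib]
  have hadd2 : ∀ x y z w : Fin 5 → ℝ, T x (y + z) w = T x y w + T x z w := by
    intro x y z w
    simp only [hT, Pi.add_apply, add_mul, mul_add, Finset.sum_add_distrib]
  have hadd3 : ∀ x y z w : Fin 5 → ℝ, T x y (z + w) = T x y z + T x y w := by
    intro x y z w
    simp only [hT, Pi.add_apply, add_mul, mul_add, Finset.sum_add_distrib]
  have hs12 : ∀ x y z : Fin 5 → ℝ, T x y z = T y x z := by
    intro x y z
    simp only [hT]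
    rw [Finset.sum_comm]
    refine Finset.sum_congr rfl fun i _ => ?_
    refine Finset.sum_congr rfl fun j _ => ?_
    refine Finset.sum_congr rfl fun k _ => ?_
    rw [hsym1]; ring
  have hs23 : ∀ x y z : Fin 5 → ℝ, T x y z = T x z y := by
    intro x y z
    simp only [hT]
    refine Finset.sum_congr rfl fun i _ => ?_
    rw [Finset.sum_comm]
    refine Finset.sum_congr rfl fun j _ => ?_
    refine Finset.sum_congr rfl fun k _ => ?_
    rw [hsym2]; ring
  have hpol : ∀ a b c : Fin 5 → ℝ, 6 * T a b c =
      T (a+b+c) (a+b+c) (a+b+c) - T (a+b) (a+b) (a+b) - T (a+c) (a+c) (a+c)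
        - T (b+c) (b+c) (b+c) + T a a a + T b b b + T c c c := by
    intro a b c
    simp only [hadd1, hadd2, hadd3]
    linarith [hs12 a b a, hs12 a b b, hs12 a b c, hs12 a c a, hs12 a c b, hs12 a c c,
      hs12 b a a, hs12 b a b, hs12 b a c, hs12 b c a, hs12 b c b, hs12 b c c,
      hs12 c a a, hs12 c a b, hs12 c a c, hs12 c b a, hs12 c b b, hs12 c b c,
      hs23 a a b, hs23 a a c, hs23 a b a, hs23 a b b, hs23 a b c, hs23 a c a,
      hs23 a c b, hs23 a c c, hs23 b a a, hs23 b a b, hs23 b a c, hs23 b b a,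
      hs23 b b c, hs23 b c a, hs23 b c b, hs23 b c c, hs23 c a a, hs23 c a b,
      hs23 c a c, hs23 c b a, hs23 c b b, hs23 c b c]
  have hsingle : ∀ i j k : Fin 5,
      T (Pi.single i 1) (Pi.single j 1) (Pi.single k 1) = Y i j k := by
    intro i j k
    simp only [hT, Pi.single_apply]
    simp [mul_ite, ite_mul, mul_zero, zero_mul, mul_one, one_mul,
      Finset.sum_ite_eq, Finset.sum_ite_eq']
  have hval : ∀ i j k, Y i j k = Y3 (Real.sqrt 3) i j k := by
    intro i j k
    have h6 := hpol (Pi.single i 1) (Pi.single j 1) (Pi.single k 1)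
    rw [hsingle i j k] at h6
    simp only [hTa] at h6
    fin_cases i <;> fin_cases j <;> fin_cases k <;>
      norm_num (config := { decide := true }) [cubicUps, Pi.add_apply, Pi.single_apply,
        Y3, Fin.reduceFinMk, Fin.reduceEq, reduceIte] at h6 ⊢ <;>
      linarith [h6]
  have hYe : Y = Y3 (Real.sqrt 3) := by
    funext i j k; exact hval i j k
  subst hYe
  refine ⟨?_, ?_, ?_, ?_, ?_⟩
  · intro S hS heig
    obtain ⟨hv, -, hCv, -⟩ := eigen_core _ hr hsym1 hsym2 S hS 14 heig
    have hv0 : ∀ n, graveMap (Y3 (Real.sqrt 3)) S n = 0 := fun n => by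
      have := hv n; linarith
    rw [hCv]
    ext k l
    simp [Cmat, hv0]
  · intro S hS heig
    obtain ⟨hv, -, hCv, -⟩ := eigen_core _ hr hsym1 hsym2 S hS 4 heig
    have hv0 : ∀ n, graveMap (Y3 (Real.sqrt 3)) S n = 0 := fun n => by
      have := hv n; linarith
    rw [hCv]
    ext k l
    simp [Cmat, hv0]
  · intro S hS heig
    exact neg3 _ hr hsym1 hsym2 S hS heig
  · intro S S' hS heig hS' heig' hgr
    have hC := neg3 _ hr hsym1 hsym2 S hS heig
    have hC' := neg3 _ hr hsym1 hsym2 S' hS' heig'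
    have hCv := check_eq (Y3 (Real.sqrt 3)) hsym1 hsym2 S
    have hCv' := check_eq (Y3 (Real.sqrt 3)) hsym1 hsym2 S'
    have h14 : (14:ℝ) • S = (14:ℝ) • S' := by
      rw [← hC, ← hC', hCv, hCv', hgr]
    ext k l
    have h := congrFun (congrFun h14 k) l
    simp only [Matrix.smul_apply, smul_eq_mul] at h
    linarith
  · intro v
    set S : Matrix (Fin 5) (Fin 5) ℝ := (1/14 : ℝ) • Cmat (Real.sqrt 3) v with hSdef
    have hsymS : Sᵀ = S := by
      rw [hSdef]
      ext k l
      simp only [Matrix.transpose_apply, Matrix.smul_apply, smul_eq_mul, Cmat,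
        Matrix.of_apply]
      have h : ∑ m, Y3 (Real.sqrt 3) l k m * v m = ∑ m, Y3 (Real.sqrt 3) k l m * v m :=
        Finset.sum_congr rfl fun m _ => by rw [hsym1]
      rw [h]
    have hg : graveMap (Y3 (Real.sqrt 3)) S = v := by
      rw [hSdef]
      simp only [grave_smul, grave_C _ hr]
      funext n
      ring
    refine ⟨S, hsymS, ?_, hg⟩
    have E1 := hL3' _ hr S hsymS
    have hT : (∑ i, S i i) = 0 := by
      rw [hSdef]
      simp only [Matrix.smul_apply, smul_eq_mul, ← Finset.mul_sum]
      rw [trace_C]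
      ring
    have hcheck : checkMap (Y3 (Real.sqrt 3)) S = (14:ℝ) • S := by
      rw [check_eq _ hsym1 hsym2 S]
      simp only [hg]
      rw [hSdef, smul_smul]
      norm_num
      rfl
    rw [E1, hT, hcheck]
    ext k l
    simp only [Matrix.add_apply, Matrix.sub_apply, Matrix.smul_apply, Matrix.one_apply,
      smul_eq_mul]
    ring
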